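/- Let an equilateral triangle have vertices v_k = c + R·exp(I·(2πk/3 + θ)), k = 0,1,2, with R > 0, let M be a point with L = |M − c| and d_k = |M − v_k|. Then (d₀ + d₁ + d₂)(−d₀ + d₁ + d₂)(d₀ − d₁ + d₂)(d₀ + d₁ − d₂) = 3·(R² − L²)²; equivalently, the area Δ of the Pompeiu triangle with sides d₀, d₁, d₂ (given by Heron's formula) equals (√3/4)·|R² − L²|. -/

import Mathlib

open Complex Real Finset

lemma pompeiu_dist_sq_aux (M c : ℂ) (R t : ℝ) :
    ‖M - (c + R * Complex.exp (Complex.I * (t:ℂ)))‖^2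
      = (M-c).re^2 + (M-c).im^2 + R^2
        - 2*R*((M-c).re * Real.cos t + (M-c).im * Real.sin t) := by
  rw [Complex.sq_norm, Complex.normSq_apply, mul_comm Complex.I, Complex.exp_mul_I]
  simp [Complex.sub_re, Complex.sub_im, Complex.add_re, Complex.add_im,
    Complex.mul_re, Complex.mul_im, Complex.cos_ofReal_re, Complex.sin_ofReal_re]
  nlinarith [Real.sin_sq_add_cos_sq t]

theorem pompeiu_triangle_area (c M : ℂ) (R θ : ℝ) (hR : 0 < R)
    (L : ℝ) (hL : L = ‖M - c‖)
    (d : Fin 3 → ℝ)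
    (hd : ∀ k : Fin 3,
      d k = ‖M - (c + R * Complex.exp (Complex.I * ((2 * π * (k : ℕ) / 3 + θ : ℝ) : ℂ)))‖) :
    (d 0 + d 1 + d 2) * (-d 0 + d 1 + d 2) * (d 0 - d 1 + d 2) * (d 0 + d 1 - d 2)
        = 3 * (R ^ 2 - L ^ 2) ^ 2
      ∧ (1 / 4) * Real.sqrt
          ((d 0 + d 1 + d 2) * (-d 0 + d 1 + d 2) * (d 0 - d 1 + d 2) * (d 0 + d 1 - d 2))
        = (Real.sqrt 3 / 4) * |R ^ 2 - L ^ 2| := by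
  have main : (d 0 + d 1 + d 2) * (-d 0 + d 1 + d 2) * (d 0 - d 1 + d 2) * (d 0 + d 1 - d 2)
      = 3 * (R ^ 2 - L ^ 2) ^ 2 := by
    set a := (M - c).re with ha
    set b := (M - c).im with hb
    set p := Real.cos θ with hp
    set q := Real.sin θ with hq
    set s := Real.sqrt 3 with hs
    have hs3 : s ^ 2 = 3 := Real.sq_sqrt (by norm_num)
    have hpq : p ^ 2 + q ^ 2 = 1 := by
      rw [hp, hq]; exact Real.cos_sq_add_sin_sq θ
    have hL2 : L ^ 2 = a ^ 2 + b ^ 2 := by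
      rw [hL, Complex.sq_norm, Complex.normSq_apply]; ring
    have hc1 : Real.cos (2*π*1/3) = -(1/2) := by
      rw [show (2*π*1/3 : ℝ) = π - π/3 by ring, Real.cos_pi_sub, Real.cos_pi_div_three]
    have hs1 : Real.sin (2*π*1/3) = s/2 := by
      rw [show (2*π*1/3 : ℝ) = π - π/3 by ring, Real.sin_pi_sub, Real.sin_pi_div_three, hs]
    have hc2 : Real.cos (2*π*2/3) = -(1/2) := by
      rw [show (2*π*2/3 : ℝ) = π/3 + π by ring, Real.cos_add_pi, Real.cos_pi_div_three]
    have hs2 : Real.sin (2*π*2/3) = -(s/2) := by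
      rw [show (2*π*2/3 : ℝ) = π/3 + π by ring, Real.sin_add_pi, Real.sin_pi_div_three, hs]
    have h0 : d 0 ^ 2 = a^2 + b^2 + R^2 - 2*R*(a*p + b*q) := by
      rw [hd 0]
      have : ((((0:Fin 3) : ℕ) : ℝ)) = 0 := by norm_num
      rw [this, show (2*π*0/3 + θ : ℝ) = θ by ring, pompeiu_dist_sq_aux]
    have h1 : d 1 ^ 2 = a^2 + b^2 + R^2
        - 2*R*(a*(-(1/2)*p - s/2*q) + b*(s/2*p - 1/2*q)) := by
      rw [hd 1]
      have : ((((1:Fin 3) : ℕ) : ℝ)) = 1 := by norm_num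
      rw [this, pompeiu_dist_sq_aux, Real.cos_add, Real.sin_add, hc1, hs1, ← hp, ← hq]
      ring
    have h2 : d 2 ^ 2 = a^2 + b^2 + R^2
        - 2*R*(a*(-(1/2)*p + s/2*q) + b*(-(s/2)*p - 1/2*q)) := by
      rw [hd 2]
      have : ((((2:Fin 3) : ℕ) : ℝ)) = 2 := by norm_num
      rw [this, pompeiu_dist_sq_aux, Real.cos_add, Real.sin_add, hc2, hs2, ← hp, ← hq]
      ring
    have expand : (d 0 + d 1 + d 2) * (-d 0 + d 1 + d 2) * (d 0 - d 1 + d 2) * (d 0 + d 1 - d 2)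
        = 2*((d 0^2)*(d 1^2) + (d 1^2)*(d 2^2) + (d 2^2)*(d 0^2))
          - ((d 0^2)^2 + (d 1^2)^2 + (d 2^2)^2) := by ring
    rw [expand, h0, h1, h2]
    linear_combination (R^2*(a^2*q^2 + b^2*p^2 - 2*a*b*p*q) - 2*R^2*(a^2+b^2)
        + 10*a*b*R^2*p*q + a^2*R^2*(2-5*q^2) + b^2*R^2*(2-5*p^2)) * hs3
      + (-12*R^2*(a^2+b^2)) * hpq
      + (-3*(a^2+b^2+L^2-2*R^2)) * hL2
  refine ⟨main, ?_⟩
  rw [main, Real.sqrt_mul (by norm_num : (0:ℝ) ≤ 3), Real.sqrt_sq_eq_abs]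
  ring
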